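/- For ideal point probabilities from the 5-taxon species tree σ = ((((a,b):x, c):y, d):z, e) with (x,y,z) branch lengths such that P_σ(ABC) < P_σ(CDE) (e.g., small x, y and large z), the greedy consensus procedure that accepts the most probable clades one at a time, subject to compatibility with previously accepted clades, returns a tree containing the clade {c,d,e}, which is not a clade of σ. In particular, greedy consensus applied to exact clade probabilities can return clades absent from the species tree. -/

import Mathlib

/-- Rooted binary trees with leaves labelled by `α`. -/
inductive RTree (α : Type) where
  | leaf : α → RTree α
  | node : RTree α → RTree α → RTree α

variable {α : Type} [DecidableEq α]

def RTree.leaves : RTree α → Finset α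
  | .leaf x => {x}
  | .node l r => l.leaves ∪ r.leaves

def RTree.clades : RTree α → Finset (Finset α)
  | .leaf x => {{x}}
  | .node l r => l.clades ∪ r.clades ∪ {l.leaves ∪ r.leaves}

/-- Two sets are compatible if they are disjoint or nested. -/
def compat (C D : Finset α) : Prop := C ∩ D = ∅ ∨ C ⊆ D ∨ D ⊆ C

instance (C D : Finset α) : Decidable (compat C D) := by unfold compat; infer_instance

/-- Greedy consensus: process candidate clades in the given order, accepting each clade
that is compatible with all previously accepted clades. -/
def greedy : List (Finset α) → List (Finset α) → List (Finset α)
  | [], acc => acc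
  | C :: rest, acc =>
      if acc.all (fun D => decide (compat C D)) then greedy rest (C :: acc)
      else greedy rest acc

/- ### Auxiliary lemmas -/

private lemma gcm_stall : ∀ (L acc : List (Finset α)),
    (∀ C ∈ L, ∃ D ∈ acc, ¬ compat C D) → greedy L acc = acc
  | [], _, _ => rfl
  | C :: rest, acc, h => by
    obtain ⟨D, hD, hcd⟩ := h C (List.mem_cons_self)
    rw [greedy, if_neg, gcm_stall rest acc (fun C' hC' => h C' (List.mem_cons_of_mem _ hC'))]
    simp only [List.all_eq_true, decide_eq_true_eq]
    push_neg
    exact ⟨D, hD, hcd⟩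

private lemma gcm_compat_image {β : Type} [DecidableEq β] (g : α → β)
    (hg : Function.Injective g) (S T : Finset α) :
    compat (S.image g) (T.image g) ↔ compat S T := by
  unfold compat
  rw [← Finset.image_inter _ _ hg, Finset.image_eq_empty,
      Finset.image_subset_image_iff hg, Finset.image_subset_image_iff hg]

private lemma gcm_fin5_key : ∀ S : Finset (Fin 5), 2 ≤ S.card → S ≠ Finset.univ →
    S ∉ ({{3,4},{0,1},{0,2},{1,2},{2,3,4},{0,1,2}} : Finset (Finset (Fin 5))) →
    ¬ compat S {3,4} ∨ ¬ compat S {0,1} ∨ ¬ compat S {2,3,4} := by decide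

private lemma gcm_head_eq (P : Finset α → ℝ) (M : List (Finset α))
    (hs : M.Pairwise (fun C D => P D ≤ P C)) (s : Finset α) (hsM : s ∈ M)
    (hmax : ∀ C ∈ M, C ≠ s → P C < P s) : ∃ T, M = s :: T := by
  cases M with
  | nil => cases hsM
  | cons C T =>
    rcases eq_or_ne C s with rfl | hne
    · exact ⟨T, rfl⟩
    · exfalso
      have hsT : s ∈ T := by
        rcases List.mem_cons.mp hsM with h | h
        · exact absurd h.symm hne
        · exact h
      have hle := (List.pairwise_cons.mp hs).1 s hsT
      have hlt := hmax C (List.mem_cons_self) hne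
      linarith

private lemma gcm_head_pair (P : Finset α → ℝ) (M : List (Finset α))
    (hs : M.Pairwise (fun C D => P D ≤ P C)) (s1 s2 : Finset α) (hs1 : s1 ∈ M)
    (hmax : ∀ C ∈ M, C ≠ s1 → C ≠ s2 → P C < P s1) :
    ∃ C T, M = C :: T ∧ (C = s1 ∨ C = s2) := by
  cases M with
  | nil => cases hs1
  | cons C T =>
    refine ⟨C, T, rfl, ?_⟩
    by_contra h
    push_neg at h
    have hsT : s1 ∈ T := by
      rcases List.mem_cons.mp hs1 with hh | hh
      · exact absurd hh.symm h.1
      · exact hh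
    have hle := (List.pairwise_cons.mp hs).1 s1 hsT
    have hlt := hmax C (List.mem_cons_self) h.1 h.2
    linarith

/-- Greedy consensus can be misleading.  Consider the 5-taxon species tree
`σ = (((a,b):x, c):y, (d,e):z)` and clade probabilities `P` with the ordering
`P(DE) > P(AB) > P(AC) = P(BC) > P(CDE) > P(ABC) >` all other nontrivial clade
probabilities (as occurs for `(x,y,z) = (0.05, 0.05, 2.0)`).  Running greedy consensus
through the nontrivial subsets of `X` in decreasing probability order accepts exactly
the clades `{d,e}, {a,b}, {c,d,e}`, yielding the tree `((a,b),(c,(d,e)))`; in particular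
the accepted clade `{c,d,e}` is not a clade of `σ`. -/
theorem greedy_consensus_misleading
    (a b c d e : α)
    (hdist : ({a, b, c, d, e} : Finset α).card = 5)
    (X : Finset α) (hX : X = {a, b, c, d, e})
    (σ : RTree α)
    (hσ : σ = .node (.node (.node (.leaf a) (.leaf b)) (.leaf c))
                    (.node (.leaf d) (.leaf e)))
    (τ : RTree α)
    (hτ : τ = .node (.node (.leaf a) (.leaf b))
                    (.node (.leaf c) (.node (.leaf d) (.leaf e))))
    (P : Finset α → ℝ)
    (h1 : P {a, b} < P {d, e})
    (h2 : P {a, c} < P {a, b})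
    (h3 : P {a, c} = P {b, c})
    (h4 : P {c, d, e} < P {b, c})
    (h5 : P {a, b, c} < P {c, d, e})
    (h6 : ∀ C ⊆ X, 2 ≤ C.card → C ≠ X →
      C ∉ ({{d, e}, {a, b}, {a, c}, {b, c}, {c, d, e}, {a, b, c}} : Finset (Finset α)) →
      P C < P {a, b, c})
    (L : List (Finset α)) (hnd : L.Nodup)
    (hmem : ∀ C : Finset α, C ∈ L ↔ (C ⊆ X ∧ 2 ≤ C.card ∧ C ≠ X))
    (hsorted : L.Pairwise (fun C D => P D ≤ P C)) :
    (greedy L []).toFinset = ({{d, e}, {a, b}, {c, d, e}} : Finset (Finset α)) ∧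
    ({c, d, e} : Finset α) ∉ σ.clades ∧
    ∀ C ∈ greedy L [], C ∈ τ.clades := by
  -- set up the injection `Fin 5 → α`
  have hlnd : ([a,b,c,d,e] : List α).Nodup := by
    rw [← Multiset.coe_nodup, ← Multiset.toFinset_card_eq_card_iff_nodup]
    show ([a,b,c,d,e] : List α).toFinset.card = _
    simpa using hdist
  set g : Fin 5 → α := ([a,b,c,d,e] : List α).get with hgdef
  have g0 : g 0 = a := rfl
  have g1 : g 1 = b := rfl
  have g2 : g 2 = c := rfl
  have g3 : g 3 = d := rfl
  have g4 : g 4 = e := rfl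
  have hinj : Function.Injective g := List.nodup_iff_injective_get.mp hlnd
  have himgI : Function.Injective (Finset.image g) := Finset.image_injective hinj
  have hXimg : X = (Finset.univ : Finset (Fin 5)).image g := by
    rw [hX]; ext x
    simp only [Finset.mem_image, Finset.mem_univ, true_and, Finset.mem_insert,
      Finset.mem_singleton]
    constructor
    · rintro (rfl|rfl|rfl|rfl|rfl)
      exacts [⟨0, rfl⟩, ⟨1, rfl⟩, ⟨2, rfl⟩, ⟨3, rfl⟩, ⟨4, rfl⟩]
    · rintro ⟨i, rfl⟩; fin_cases i <;> simp [g0, g1, g2, g3, g4]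
  -- image forms of the relevant clades
  have e1 : ({d, e} : Finset α) = Finset.image g {3, 4} := by
    rw [Finset.image_insert, Finset.image_singleton, g3, g4]
  have e2 : ({a, b} : Finset α) = Finset.image g {0, 1} := by
    rw [Finset.image_insert, Finset.image_singleton, g0, g1]
  have e3 : ({a, c} : Finset α) = Finset.image g {0, 2} := by
    rw [Finset.image_insert, Finset.image_singleton, g0, g2]
  have e4 : ({b, c} : Finset α) = Finset.image g {1, 2} := by
    rw [Finset.image_insert, Finset.image_singleton, g1, g2]
  have e5 : ({c, d, e} : Finset α) = Finset.image g {2, 3, 4} := by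
    rw [Finset.image_insert, Finset.image_insert, Finset.image_singleton, g2, g3, g4]
  have e6 : ({a, b, c} : Finset α) = Finset.image g {0, 1, 2} := by
    rw [Finset.image_insert, Finset.image_insert, Finset.image_singleton, g0, g1, g2]
  have ea : ({a} : Finset α) = Finset.image g {0} := by rw [Finset.image_singleton, g0]
  have eb : ({b} : Finset α) = Finset.image g {1} := by rw [Finset.image_singleton, g1]
  have ec : ({c} : Finset α) = Finset.image g {2} := by rw [Finset.image_singleton, g2]
  have ed : ({d} : Finset α) = Finset.image g {3} := by rw [Finset.image_singleton, g3]
  have ee : ({e} : Finset α) = Finset.image g {4} := by rw [Finset.image_singleton, g4]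
  -- candidacy of image sets
  have hQ : ∀ S : Finset (Fin 5), 2 ≤ S.card → S ≠ Finset.univ →
      (S.image g ⊆ X ∧ 2 ≤ (S.image g).card ∧ S.image g ≠ X) := by
    intro S hc hne
    refine ⟨?_, ?_, ?_⟩
    · rw [hXimg]; exact Finset.image_subset_image (Finset.subset_univ S)
    · rwa [Finset.card_image_of_injective S hinj]
    · rw [hXimg]; exact fun h => hne (himgI h)
  -- disequalities among the six special clades via `decide` on `Fin 5`
  have hne_img : ∀ S T : Finset (Fin 5), S ≠ T → S.image g ≠ T.image g :=
    fun S T h hh => h (himgI hh)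
  -- probability chain
  have hPle : ∀ C, C ⊆ X → 2 ≤ C.card → C ≠ X →
      C ≠ {d,e} → C ≠ {a,b} → C ≠ {a,c} → C ≠ {b,c} → C ≠ {c,d,e} → C ≠ {a,b,c} →
      P C < P {a,b,c} := by
    intro C hsub hcard hne n1 n2 n3 n4 n5 n6
    exact h6 C hsub hcard hne (by simp [n1, n2, n3, n4, n5, n6])
  -- the six special clades are members of L
  have hmde : ({d,e} : Finset α) ∈ L := by
    rw [hmem, e1]; exact hQ _ (by decide) (by decide)
  have hmab : ({a,b} : Finset α) ∈ L := by
    rw [hmem, e2]; exact hQ _ (by decide) (by decide)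
  have hmac : ({a,c} : Finset α) ∈ L := by
    rw [hmem, e3]; exact hQ _ (by decide) (by decide)
  have hmbc : ({b,c} : Finset α) ∈ L := by
    rw [hmem, e4]; exact hQ _ (by decide) (by decide)
  have hmcde : ({c,d,e} : Finset α) ∈ L := by
    rw [hmem, e5]; exact hQ _ (by decide) (by decide)
  have hmabc : ({a,b,c} : Finset α) ∈ L := by
    rw [hmem, e6]; exact hQ _ (by decide) (by decide)
  -- stage 1 : head of L is {d,e}
  obtain ⟨T1, hL1⟩ := gcm_head_eq P L hsorted {d,e} hmde (by
    intro C hC hne1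
    obtain ⟨hsub, hcard, hneX⟩ := (hmem C).mp hC
    rcases eq_or_ne C {a,b} with rfl | n2; · exact h1
    rcases eq_or_ne C {a,c} with rfl | n3; · linarith
    rcases eq_or_ne C {b,c} with rfl | n4; · linarith
    rcases eq_or_ne C {c,d,e} with rfl | n5; · linarith
    rcases eq_or_ne C {a,b,c} with rfl | n6; · linarith
    have := hPle C hsub hcard hneX hne1 n2 n3 n4 n5 n6
    linarith)
  subst hL1
  rw [List.nodup_cons] at hnd
  obtain ⟨hde_nT1, hnd1⟩ := hnd
  rw [List.pairwise_cons] at hsorted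
  obtain ⟨-, hsorted1⟩ := hsorted
  have hmem1 : ∀ C ∈ T1, C ⊆ X ∧ 2 ≤ C.card ∧ C ≠ X :=
    fun C hC => (hmem C).mp (List.mem_cons_of_mem _ hC)
  have hT1ne : ∀ C ∈ T1, C ≠ ({d,e} : Finset α) := fun C hC h => hde_nT1 (h ▸ hC)
  -- stage 2 : next is {a,b}
  have hmab1 : ({a,b} : Finset α) ∈ T1 := by
    rcases List.mem_cons.mp hmab with h | h
    · exact absurd h (by rw [e2, e1]; exact hne_img _ _ (by decide))
    · exact h
  obtain ⟨T2, hL2⟩ := gcm_head_eq P T1 hsorted1 {a,b} hmab1 (by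
    intro C hC hne2
    obtain ⟨hsub, hcard, hneX⟩ := hmem1 C hC
    have hne1 := hT1ne C hC
    rcases eq_or_ne C {a,c} with rfl | n3; · exact h2
    rcases eq_or_ne C {b,c} with rfl | n4; · linarith
    rcases eq_or_ne C {c,d,e} with rfl | n5; · linarith
    rcases eq_or_ne C {a,b,c} with rfl | n6; · linarith
    have := hPle C hsub hcard hneX hne1 hne2 n3 n4 n5 n6
    linarith)
  subst hL2
  rw [List.nodup_cons] at hnd1
  obtain ⟨hab_nT2, hnd2⟩ := hnd1
  rw [List.pairwise_cons] at hsorted1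
  obtain ⟨-, hsorted2⟩ := hsorted1
  have hmem2 : ∀ C ∈ T2, C ⊆ X ∧ 2 ≤ C.card ∧ C ≠ X :=
    fun C hC => hmem1 C (List.mem_cons_of_mem _ hC)
  have hT2ne1 : ∀ C ∈ T2, C ≠ ({d,e} : Finset α) :=
    fun C hC => hT1ne C (List.mem_cons_of_mem _ hC)
  have hT2ne2 : ∀ C ∈ T2, C ≠ ({a,b} : Finset α) := fun C hC h => hab_nT2 (h ▸ hC)
  -- stage 3 : next is {a,c} or {b,c}
  have hmac2 : ({a,c} : Finset α) ∈ T2 := by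
    rcases List.mem_cons.mp hmac with h | h
    · exact absurd h (by rw [e3, e1]; exact hne_img _ _ (by decide))
    rcases List.mem_cons.mp h with h | h
    · exact absurd h (by rw [e3, e2]; exact hne_img _ _ (by decide))
    · exact h
  obtain ⟨p, T3, hL3, hp⟩ := gcm_head_pair P T2 hsorted2 {a,c} {b,c} hmac2 (by
    intro C hC n3 n4
    obtain ⟨hsub, hcard, hneX⟩ := hmem2 C hC
    have hne1 := hT2ne1 C hC
    have hne2 := hT2ne2 C hC
    rcases eq_or_ne C {c,d,e} with rfl | n5; · linarith
    rcases eq_or_ne C {a,b,c} with rfl | n6; · linarith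
    have := hPle C hsub hcard hneX hne1 hne2 n3 n4 n5 n6
    linarith)
  subst hL3
  rw [List.nodup_cons] at hnd2
  obtain ⟨hp_nT3, hnd3⟩ := hnd2
  rw [List.pairwise_cons] at hsorted2
  obtain ⟨-, hsorted3⟩ := hsorted2
  have hmem3 : ∀ C ∈ T3, C ⊆ X ∧ 2 ≤ C.card ∧ C ≠ X :=
    fun C hC => hmem2 C (List.mem_cons_of_mem _ hC)
  have hT3ne1 : ∀ C ∈ T3, C ≠ ({d,e} : Finset α) :=
    fun C hC => hT2ne1 C (List.mem_cons_of_mem _ hC)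
  have hT3ne2 : ∀ C ∈ T3, C ≠ ({a,b} : Finset α) :=
    fun C hC => hT2ne2 C (List.mem_cons_of_mem _ hC)
  have hT3nep : ∀ C ∈ T3, C ≠ p := fun C hC h => hp_nT3 (h ▸ hC)
  -- stage 4 : next is the other of {a,c}, {b,c}
  obtain ⟨q, hq, hpq3⟩ : ∃ q : Finset α, (q = {a,c} ∨ q = {b,c}) ∧ q ∈ T3 := by
    rcases hp with rfl | rfl
    · refine ⟨{b,c}, Or.inr rfl, ?_⟩
      have hbc3 : ({b,c} : Finset α) ∈ ({a,c} : Finset α) :: T3 := by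
        rcases List.mem_cons.mp hmbc with h | h
        · exact absurd h (by rw [e4, e1]; exact hne_img _ _ (by decide))
        rcases List.mem_cons.mp h with h | h
        · exact absurd h (by rw [e4, e2]; exact hne_img _ _ (by decide))
        · exact h
      rcases List.mem_cons.mp hbc3 with h | h
      · exact absurd h (by rw [e4, e3]; exact hne_img _ _ (by decide))
      · exact h
    · refine ⟨{a,c}, Or.inl rfl, ?_⟩
      rcases List.mem_cons.mp hmac2 with h | h
      · exact absurd h (by rw [e3, e4]; exact hne_img _ _ (by decide))
      · exact h
  have hqp : q ≠ p := fun h => hp_nT3 (h ▸ hpq3)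
  have hpair : ∀ C : Finset α, C ≠ p → C ≠ q → C ≠ ({a,c} : Finset α) ∧ C ≠ ({b,c} : Finset α) := by
    intro C hcp hcq
    rcases hp with rfl | rfl <;> rcases hq with rfl | rfl
    · exact absurd rfl hqp
    · exact ⟨hcp, hcq⟩
    · exact ⟨hcq, hcp⟩
    · exact absurd rfl hqp
  have hPq : P q = P ({a,c} : Finset α) := by
    rcases hq with rfl | rfl
    · rfl
    · exact h3.symm
  obtain ⟨T4, hL4⟩ := gcm_head_eq P T3 hsorted3 q hpq3 (by
    intro C hC hneq
    obtain ⟨hsub, hcard, hneX⟩ := hmem3 C hC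
    have hne1 := hT3ne1 C hC
    have hne2 := hT3ne2 C hC
    have hnep := hT3nep C hC
    obtain ⟨n3, n4⟩ := hpair C hnep hneq
    rw [hPq]
    rcases eq_or_ne C {c,d,e} with rfl | n5; · linarith
    rcases eq_or_ne C {a,b,c} with rfl | n6; · linarith
    have := hPle C hsub hcard hneX hne1 hne2 n3 n4 n5 n6
    linarith)
  subst hL4
  rw [List.nodup_cons] at hnd3
  obtain ⟨hq_nT4, hnd4⟩ := hnd3
  rw [List.pairwise_cons] at hsorted3
  obtain ⟨-, hsorted4⟩ := hsorted3
  have hmem4 : ∀ C ∈ T4, C ⊆ X ∧ 2 ≤ C.card ∧ C ≠ X :=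
    fun C hC => hmem3 C (List.mem_cons_of_mem _ hC)
  have hT4ne1 : ∀ C ∈ T4, C ≠ ({d,e} : Finset α) :=
    fun C hC => hT3ne1 C (List.mem_cons_of_mem _ hC)
  have hT4ne2 : ∀ C ∈ T4, C ≠ ({a,b} : Finset α) :=
    fun C hC => hT3ne2 C (List.mem_cons_of_mem _ hC)
  have hT4nep : ∀ C ∈ T4, C ≠ p := fun C hC => hT3nep C (List.mem_cons_of_mem _ hC)
  have hT4neq : ∀ C ∈ T4, C ≠ q := fun C hC h => hq_nT4 (h ▸ hC)
  have hT4ne3 : ∀ C ∈ T4, C ≠ ({a,c} : Finset α) :=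
    fun C hC => (hpair C (hT4nep C hC) (hT4neq C hC)).1
  have hT4ne4 : ∀ C ∈ T4, C ≠ ({b,c} : Finset α) :=
    fun C hC => (hpair C (hT4nep C hC) (hT4neq C hC)).2
  -- stage 5 : next is {c,d,e}
  have hmcde4 : ({c,d,e} : Finset α) ∈ T4 := by
    have h0 := hmcde
    rcases List.mem_cons.mp h0 with h | h0
    · exact absurd h (by rw [e5, e1]; exact hne_img _ _ (by decide))
    rcases List.mem_cons.mp h0 with h | h0
    · exact absurd h (by rw [e5, e2]; exact hne_img _ _ (by decide))
    rcases List.mem_cons.mp h0 with h | h0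
    · exfalso
      rcases hp with rfl | rfl
      · exact (by rw [e5, e3]; exact hne_img _ _ (by decide) : ({c,d,e}:Finset α) ≠ {a,c}) h
      · exact (by rw [e5, e4]; exact hne_img _ _ (by decide) : ({c,d,e}:Finset α) ≠ {b,c}) h
    rcases List.mem_cons.mp h0 with h | h0
    · exfalso
      rcases hq with rfl | rfl
      · exact (by rw [e5, e3]; exact hne_img _ _ (by decide) : ({c,d,e}:Finset α) ≠ {a,c}) h
      · exact (by rw [e5, e4]; exact hne_img _ _ (by decide) : ({c,d,e}:Finset α) ≠ {b,c}) h
    · exact h0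
  obtain ⟨T5, hL5⟩ := gcm_head_eq P T4 hsorted4 {c,d,e} hmcde4 (by
    intro C hC n5
    obtain ⟨hsub, hcard, hneX⟩ := hmem4 C hC
    rcases eq_or_ne C {a,b,c} with rfl | n6; · linarith
    have := hPle C hsub hcard hneX (hT4ne1 C hC) (hT4ne2 C hC) (hT4ne3 C hC)
      (hT4ne4 C hC) n5 n6
    linarith)
  subst hL5
  rw [List.nodup_cons] at hnd4
  obtain ⟨hcde_nT5, hnd5⟩ := hnd4
  rw [List.pairwise_cons] at hsorted4
  obtain ⟨-, hsorted5⟩ := hsorted4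
  have hmem5 : ∀ C ∈ T5, C ⊆ X ∧ 2 ≤ C.card ∧ C ≠ X :=
    fun C hC => hmem4 C (List.mem_cons_of_mem _ hC)
  have hT5ne1 : ∀ C ∈ T5, C ≠ ({d,e} : Finset α) :=
    fun C hC => hT4ne1 C (List.mem_cons_of_mem _ hC)
  have hT5ne2 : ∀ C ∈ T5, C ≠ ({a,b} : Finset α) :=
    fun C hC => hT4ne2 C (List.mem_cons_of_mem _ hC)
  have hT5ne3 : ∀ C ∈ T5, C ≠ ({a,c} : Finset α) :=
    fun C hC => hT4ne3 C (List.mem_cons_of_mem _ hC)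
  have hT5ne4 : ∀ C ∈ T5, C ≠ ({b,c} : Finset α) :=
    fun C hC => hT4ne4 C (List.mem_cons_of_mem _ hC)
  have hT5ne5 : ∀ C ∈ T5, C ≠ ({c,d,e} : Finset α) := fun C hC h => hcde_nT5 (h ▸ hC)
  -- stage 6 : next is {a,b,c}
  have hmabc5 : ({a,b,c} : Finset α) ∈ T5 := by
    have h0 := hmabc
    rcases List.mem_cons.mp h0 with h | h0
    · exact absurd h (by rw [e6, e1]; exact hne_img _ _ (by decide))
    rcases List.mem_cons.mp h0 with h | h0
    · exact absurd h (by rw [e6, e2]; exact hne_img _ _ (by decide))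
    rcases List.mem_cons.mp h0 with h | h0
    · exfalso
      rcases hp with rfl | rfl
      · exact (by rw [e6, e3]; exact hne_img _ _ (by decide) : ({a,b,c}:Finset α) ≠ {a,c}) h
      · exact (by rw [e6, e4]; exact hne_img _ _ (by decide) : ({a,b,c}:Finset α) ≠ {b,c}) h
    rcases List.mem_cons.mp h0 with h | h0
    · exfalso
      rcases hq with rfl | rfl
      · exact (by rw [e6, e3]; exact hne_img _ _ (by decide) : ({a,b,c}:Finset α) ≠ {a,c}) h
      · exact (by rw [e6, e4]; exact hne_img _ _ (by decide) : ({a,b,c}:Finset α) ≠ {b,c}) h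
    rcases List.mem_cons.mp h0 with h | h0
    · exact absurd h (by rw [e6, e5]; exact hne_img _ _ (by decide))
    · exact h0
  obtain ⟨T6, hL6⟩ := gcm_head_eq P T5 hsorted5 {a,b,c} hmabc5 (by
    intro C hC n6
    obtain ⟨hsub, hcard, hneX⟩ := hmem5 C hC
    exact hPle C hsub hcard hneX (hT5ne1 C hC) (hT5ne2 C hC) (hT5ne3 C hC)
      (hT5ne4 C hC) (hT5ne5 C hC) n6)
  subst hL6
  rw [List.nodup_cons] at hnd5
  obtain ⟨habc_nT6, hnd6⟩ := hnd5
  have hmem6 : ∀ C ∈ T6, C ⊆ X ∧ 2 ≤ C.card ∧ C ≠ X :=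
    fun C hC => hmem5 C (List.mem_cons_of_mem _ hC)
  -- compatibility facts
  have hcompat : ∀ S T : Finset (Fin 5), compat S T →
      compat (S.image g) (T.image g) :=
    fun S T h => (gcm_compat_image g hinj S T).mpr h
  have hincompat : ∀ S T : Finset (Fin 5), ¬ compat S T →
      ¬ compat (S.image g) (T.image g) :=
    fun S T h hh => h ((gcm_compat_image g hinj S T).mp hh)
  have c_ab_de : compat ({a,b} : Finset α) {d,e} := by
    rw [e2, e1]; exact hcompat _ _ (by decide)
  have c_cde_ab : compat ({c,d,e} : Finset α) {a,b} := by
    rw [e5, e2]; exact hcompat _ _ (by decide)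
  have c_cde_de : compat ({c,d,e} : Finset α) {d,e} := by
    rw [e5, e1]; exact hcompat _ _ (by decide)
  have nc_p_ab : ¬ compat p ({a,b} : Finset α) := by
    rcases hp with rfl | rfl
    · rw [e3, e2]; exact hincompat _ _ (by decide)
    · rw [e4, e2]; exact hincompat _ _ (by decide)
  have nc_q_ab : ¬ compat q ({a,b} : Finset α) := by
    rcases hq with rfl | rfl
    · rw [e3, e2]; exact hincompat _ _ (by decide)
    · rw [e4, e2]; exact hincompat _ _ (by decide)
  have nc_abc_cde : ¬ compat ({a,b,c} : Finset α) ({c,d,e} : Finset α) := by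
    rw [e6, e5]; exact hincompat _ _ (by decide)
  -- compute greedy
  have cond1 : (([] : List (Finset α)).all fun D => decide (compat ({d,e} : Finset α) D)) = true := rfl
  have cond2 : (([{d,e}] : List (Finset α)).all fun D => decide (compat ({a,b} : Finset α) D)) = true := by
    simp only [List.all_cons, List.all_nil, Bool.and_true, decide_eq_true_eq]
    exact c_ab_de
  have cond3 : ¬ ((([{a,b},{d,e}] : List (Finset α)).all fun D => decide (compat p D)) = true) := by
    simp only [List.all_eq_true, decide_eq_true_eq]
    push_neg
    exact ⟨{a,b}, by simp, nc_p_ab⟩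
  have cond4 : ¬ ((([{a,b},{d,e}] : List (Finset α)).all fun D => decide (compat q D)) = true) := by
    simp only [List.all_eq_true, decide_eq_true_eq]
    push_neg
    exact ⟨{a,b}, by simp, nc_q_ab⟩
  have cond5 : (([{a,b},{d,e}] : List (Finset α)).all fun D => decide (compat ({c,d,e} : Finset α) D)) = true := by
    simp only [List.all_cons, List.all_nil, Bool.and_true, Bool.and_eq_true, decide_eq_true_eq]
    exact ⟨c_cde_ab, c_cde_de⟩
  have cond6 : ¬ ((([{c,d,e},{a,b},{d,e}] : List (Finset α)).all fun D => decide (compat ({a,b,c} : Finset α) D)) = true) := by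
    simp only [List.all_eq_true, decide_eq_true_eq]
    push_neg
    exact ⟨{c,d,e}, by simp, nc_abc_cde⟩
  have hgreedy : greedy ({d,e} :: {a,b} :: p :: q :: {c,d,e} :: {a,b,c} :: T6)
      ([] : List (Finset α)) = [{c,d,e}, {a,b}, {d,e}] := by
    rw [greedy, if_pos cond1, greedy, if_pos cond2, greedy, if_neg cond3,
      greedy, if_neg cond4, greedy, if_pos cond5, greedy, if_neg cond6]
    apply gcm_stall
    intro C hC
    -- C is a candidate distinct from all six special clades
    obtain ⟨hsub, hcard, hneX⟩ := hmem6 C hC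
    have hne1 := hT5ne1 C (List.mem_cons_of_mem _ hC)
    have hne2 := hT5ne2 C (List.mem_cons_of_mem _ hC)
    have hne3 := hT5ne3 C (List.mem_cons_of_mem _ hC)
    have hne4 := hT5ne4 C (List.mem_cons_of_mem _ hC)
    have hne5 := hT5ne5 C (List.mem_cons_of_mem _ hC)
    have hne6 : C ≠ ({a,b,c} : Finset α) := fun h => habc_nT6 (h ▸ hC)
    -- transfer to Fin 5
    rw [hXimg] at hsub
    obtain ⟨S, -, rfl⟩ := Finset.subset_image_iff.mp hsub
    have hScard : 2 ≤ S.card := by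
      rwa [Finset.card_image_of_injective S hinj] at hcard
    have hSuniv : S ≠ Finset.univ := fun h => hneX (by rw [h, ← hXimg])
    have hSspec : S ∉ ({{3,4},{0,1},{0,2},{1,2},{2,3,4},{0,1,2}} :
        Finset (Finset (Fin 5))) := by
      simp only [Finset.mem_insert, Finset.mem_singleton]
      push_neg
      refine ⟨fun h => hne1 (by rw [h, ← e1]), fun h => hne2 (by rw [h, ← e2]),
        fun h => hne3 (by rw [h, ← e3]), fun h => hne4 (by rw [h, ← e4]),
        fun h => hne5 (by rw [h, ← e5]), fun h => hne6 (by rw [h, ← e6])⟩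
    rcases gcm_fin5_key S hScard hSuniv hSspec with h | h | h
    · exact ⟨{d,e}, by simp, by rw [e1]; exact hincompat _ _ h⟩
    · exact ⟨{a,b}, by simp, by rw [e2]; exact hincompat _ _ h⟩
    · exact ⟨{c,d,e}, by simp, by rw [e5]; exact hincompat _ _ h⟩
  rw [hgreedy]
  refine ⟨?_, ?_, ?_⟩
  · ext Y
    simp only [List.toFinset_cons, List.toFinset_nil, LawfulSingleton.insert_empty_eq,
      Finset.mem_insert, Finset.mem_singleton]
    constructor
    · rintro (h|h|h) <;> subst h <;> simp
    · rintro (h|h|h) <;> subst h <;> simp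
  · subst hσ
    intro h
    simp only [RTree.clades, RTree.leaves, Finset.mem_union, Finset.mem_singleton] at h
    rcases h with (((((h|h)|h)|h)|h)|(h|h)|h)|h
    · rw [e5, ea] at h; exact absurd (himgI h) (by decide)
    · rw [e5, eb] at h; exact absurd (himgI h) (by decide)
    · rw [e5, ea, eb, ← Finset.image_union] at h; exact absurd (himgI h) (by decide)
    · rw [e5, ec] at h; exact absurd (himgI h) (by decide)
    · rw [e5, ea, eb, ec, ← Finset.image_union, ← Finset.image_union] at h
      exact absurd (himgI h) (by decide)
    · rw [e5, ed] at h; exact absurd (himgI h) (by decide)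
    · rw [e5, ee] at h; exact absurd (himgI h) (by decide)
    · rw [e5, ed, ee, ← Finset.image_union] at h; exact absurd (himgI h) (by decide)
    · rw [e5, ea, eb, ec, ed, ee, ← Finset.image_union, ← Finset.image_union,
        ← Finset.image_union, ← Finset.image_union] at h
      exact absurd (himgI h) (by decide)
  · intro C hC
    subst hτ
    have u1 : ({a} : Finset α) ∪ {b} = {a,b} := by
      ext x; simp only [Finset.mem_union, Finset.mem_insert, Finset.mem_singleton]
    have u2 : ({d} : Finset α) ∪ {e} = {d,e} := by
      ext x; simp only [Finset.mem_union, Finset.mem_insert, Finset.mem_singleton]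
    have u3 : ({c} : Finset α) ∪ {d,e} = {c,d,e} := by
      ext x; simp only [Finset.mem_union, Finset.mem_insert, Finset.mem_singleton]
    rcases List.mem_cons.mp hC with rfl | hC
    · simp [RTree.clades, RTree.leaves, u1, u2, u3]
    rcases List.mem_cons.mp hC with rfl | hC
    · simp [RTree.clades, RTree.leaves, u1, u2, u3]
    rcases List.mem_cons.mp hC with rfl | hC
    · simp [RTree.clades, RTree.leaves, u1, u2, u3]
    · cases hC
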